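/- Let Q be a quiver whose vertex set is equipped with a linear order ≤. A nontrivial path p in Q can be written as a composition of finitely many right-minimal directed paths if and only if s(p) < t(p) and every inner vertex k of p satisfies k < t(p). -/

import Mathlib

open Quiver

/-- The path `p` passes through the vertex `k`. -/
def PassesThrough {V : Type*} [Quiver V] {a b : V} (p : Path a b) (k : V) : Prop :=
  ∃ (v : Path a k) (u : Path k b), v.comp u = p

/-- `k` is an inner vertex of `p`. -/
def IsInnerVertex {V : Type*} [Quiver V] {a b : V} (p : Path a b) (k : V) : Prop :=
  ∃ (v : Path a k) (u : Path k b), v.length ≠ 0 ∧ u.length ≠ 0 ∧ v.comp u = p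

/-- A nontrivial path `p : i → j` is right-minimal directed if `i < j` and every inner
vertex `k` of `p` satisfies `k ≤ i`. -/
def IsRMD {V : Type*} [Quiver V] [LinearOrder V] {i j : V} (p : Path i j) : Prop :=
  p.length ≠ 0 ∧ i < j ∧ ∀ k, IsInnerVertex p k → k ≤ i

/-- `p` is a composition of finitely many (at least one) right-minimal directed paths. -/
inductive IsRMDComp {V : Type*} [Quiver V] [LinearOrder V] : ∀ {a b : V}, Path a b → Prop
  | single {a b : V} (p : Path a b) : IsRMD p → IsRMDComp p
  | comp {a b c : V} (p : Path a b) (q : Path b c) :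
      IsRMDComp p → IsRMD q → IsRMDComp (p.comp q)

section Split

variable {V : Type*} [Quiver V]

/-- Split a path into a prefix and a suffix, the suffix having length `min n p.length`. -/
def splitE {a : V} : ℕ → ∀ {b : V}, Path a b → Σ' c : V, PProd (Path a c) (Path c b)
  | 0, _, p => ⟨_, p, Path.nil⟩
  | _+1, _, Path.nil => ⟨a, Path.nil, Path.nil⟩
  | n+1, _, Path.cons q e =>
      let s := splitE n q
      ⟨s.1, s.2.1, s.2.2.cons e⟩

/-- The vertex at distance `n` from the end of `p`. -/
def vE {a b : V} (p : Path a b) (n : ℕ) : V := (splitE n p).1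

theorem comp_splitE {a : V} :
    ∀ (n : ℕ) {b : V} (p : Path a b), ((splitE n p).2.1).comp (splitE n p).2.2 = p
  | 0, _, _ => rfl
  | _+1, _, Path.nil => rfl
  | n+1, _, Path.cons q e => congrArg (·.cons e) (comp_splitE n q)

theorem splitE_comp {a c : V} (v : Path a c) :
    ∀ {b : V} (u : Path c b), splitE u.length (v.comp u) = ⟨c, v, u⟩
  | _, Path.nil => rfl
  | _, Path.cons u e => by
      show (⟨_, _, ((splitE u.length (v.comp u)).2.2).cons e⟩ :
        Σ' k : V, PProd (Path a k) (Path k _)) = _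
      rw [splitE_comp v u]

theorem length_splitE_snd {a : V} :
    ∀ (n : ℕ) {b : V} (p : Path a b), n ≤ p.length → ((splitE n p).2.2).length = n
  | 0, _, _, _ => rfl
  | n+1, _, Path.cons q e, h => by
      show ((splitE n q).2.2).length + 1 = n + 1
      rw [length_splitE_snd n q (Nat.succ_le_succ_iff.mp h)]

theorem length_splitE_fst {a : V} :
    ∀ (n : ℕ) {b : V} (p : Path a b), ((splitE n p).2.1).length = p.length - n
  | 0, _, _ => rfl
  | _+1, _, Path.nil => by simp [splitE]
  | n+1, _, Path.cons q e => by
      show ((splitE n q).2.1).length = q.length + 1 - (n + 1)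
      rw [length_splitE_fst n q]; omega

theorem vE_zero {a b : V} (p : Path a b) : vE p 0 = b := rfl

theorem vE_of_le {a : V} :
    ∀ (n : ℕ) {b : V} (p : Path a b), p.length ≤ n → vE p n = a
  | 0, _, Path.nil, _ => rfl
  | _+1, _, Path.nil, _ => rfl
  | n+1, _, Path.cons q _, h => vE_of_le n q (Nat.succ_le_succ_iff.mp h)

theorem isInner_iff {a b : V} (p : Path a b) (k : V) :
    IsInnerVertex p k ↔ ∃ n, 0 < n ∧ n < p.length ∧ vE p n = k := by
  constructor
  · rintro ⟨v, u, hv, hu, rfl⟩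
    refine ⟨u.length, Nat.pos_of_ne_zero hu, ?_, ?_⟩
    · rw [Path.length_comp]; omega
    · rw [vE, splitE_comp]
  · rintro ⟨n, hn0, hnl, rfl⟩
    refine ⟨(splitE n p).2.1, (splitE n p).2.2, ?_, ?_, comp_splitE n p⟩
    · show ((splitE n p).2.1).length ≠ 0
      rw [length_splitE_fst]; omega
    · show ((splitE n p).2.2).length ≠ 0
      rw [length_splitE_snd n p (le_of_lt hnl)]; omega

theorem vE_snd {a : V} :
    ∀ (n m : ℕ) {b : V} (p : Path a b), m ≤ n → vE ((splitE n p).2.2) m = vE p m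
  | n, 0, _, p, _ => rfl
  | 0, m+1, _, p, h => by omega
  | n+1, m+1, _, Path.nil, h => rfl
  | n+1, m+1, _, Path.cons q e, h => vE_snd n m q (Nat.succ_le_succ_iff.mp h)

theorem vE_fst {a : V} :
    ∀ (n m : ℕ) {b : V} (p : Path a b), vE ((splitE n p).2.1) m = vE p (m + n)
  | 0, m, _, p => rfl
  | n+1, m, _, Path.nil =>
      (vE_of_le _ _ (Nat.zero_le _)).trans (vE_of_le _ _ (Nat.zero_le _)).symm
  | n+1, m, _, Path.cons q e => (vE_fst n m q).trans rfl

theorem vE_comp_right {a c : V} (p : Path a c) :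
    ∀ {b : V} (q : Path c b) (n : ℕ), n ≤ q.length → vE (p.comp q) n = vE q n
  | _, _, 0, _ => rfl
  | _, Path.cons q e, n+1, h => vE_comp_right p q n (Nat.succ_le_succ_iff.mp h)

theorem vE_comp_left {a c : V} (p : Path a c) :
    ∀ {b : V} (q : Path c b) (n : ℕ), vE (p.comp q) (n + q.length) = vE p n
  | _, Path.nil, n => rfl
  | _, Path.cons q e, n => vE_comp_left p q n

end Split

theorem isRMDComp_forward {V : Type*} [Quiver V] [LinearOrder V] {a b : V} {p : Path a b}
    (h : IsRMDComp p) : a < b ∧ ∀ k, IsInnerVertex p k → k < b := by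
  induction h with
  | single p hp => exact ⟨hp.2.1, fun k hk => lt_of_le_of_lt (hp.2.2 k hk) hp.2.1⟩
  | comp p q hp hq ih =>
    refine ⟨ih.1.trans hq.2.1, fun k hk => ?_⟩
    rw [isInner_iff] at hk
    obtain ⟨n, hn0, hnl, rfl⟩ := hk
    rw [Path.length_comp] at hnl
    rcases lt_trichotomy n q.length with h | h | h
    · rw [vE_comp_right p q n h.le]
      exact lt_of_le_of_lt (hq.2.2 _ ((isInner_iff q _).mpr ⟨n, hn0, h, rfl⟩)) hq.2.1
    · subst h
      have h0 : vE (p.comp q) q.length = vE p 0 := by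
        have := vE_comp_left p q 0
        rwa [Nat.zero_add] at this
      rw [h0, vE_zero]
      exact hq.2.1
    · have h2 : n - q.length + q.length = n := by omega
      have h0 : vE (p.comp q) n = vE p (n - q.length) := by
        conv_lhs => rw [← h2]
        exact vE_comp_left p q _
      rw [h0]
      exact lt_trans (ih.2 _ ((isInner_iff p _).mpr ⟨n - q.length, by omega, by omega, rfl⟩))
        hq.2.1

theorem isRMDComp_reverse {V : Type*} [Quiver V] [LinearOrder V] :
    ∀ (L : ℕ) {a b : V} (p : Path a b), p.length = L → p.length ≠ 0 →
      a < b → (∀ k, IsInnerVertex p k → k < b) → IsRMDComp p := by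
  intro L
  induction L using Nat.strong_induction_on with
  | _ L ih =>
  intro a b p hL hp0 hab hinner
  have hL1 : 1 ≤ p.length := Nat.one_le_iff_ne_zero.mpr hp0
  set S := Finset.Icc 1 p.length with hS
  have hSne : S.Nonempty := ⟨p.length, Finset.mem_Icc.mpr ⟨hL1, le_rfl⟩⟩
  have himg : (S.image (vE p)).Nonempty := hSne.image _
  set M := (S.image (vE p)).max' himg with hM
  obtain ⟨n₀, hn₀S, hn₀⟩ : ∃ n ∈ S, vE p n = M := by
    have := (S.image (vE p)).max'_mem himg
    rw [Finset.mem_image] at this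
    exact this
  set T := S.filter (fun n => vE p n = M) with hT
  have hTne : T.Nonempty := ⟨n₀, Finset.mem_filter.mpr ⟨hn₀S, hn₀⟩⟩
  set N := T.max' hTne with hN
  have hNT := T.max'_mem hTne
  rw [Finset.mem_filter, Finset.mem_Icc] at hNT
  obtain ⟨⟨hN1, hNle⟩, hNM⟩ := hNT
  have hle : ∀ n, 1 ≤ n → n ≤ p.length → vE p n ≤ M := fun n h1 h2 =>
    Finset.le_max' _ _ (Finset.mem_image_of_mem _ (Finset.mem_Icc.mpr ⟨h1, h2⟩))
  have hmax : ∀ n, 1 ≤ n → n ≤ p.length → vE p n = M → n ≤ N := fun n h1 h2 hv =>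
    Finset.le_max' T n (Finset.mem_filter.mpr ⟨Finset.mem_Icc.mpr ⟨h1, h2⟩, hv⟩)
  have haM : a ≤ M := by
    have := hle p.length hL1 le_rfl
    rwa [vE_of_le _ _ le_rfl] at this
  by_cases hMa : M ≤ a
  · exact IsRMDComp.single p ⟨hp0, hab, fun k hk => by
      obtain ⟨n, hn0, hnl, rfl⟩ := (isInner_iff p k).mp hk
      exact (hle n hn0 hnl.le).trans hMa⟩
  · push_neg at hMa
    have hNlt : N < p.length := by
      rcases lt_or_eq_of_le hNle with h | h
      · exact h
      · exfalso
        rw [h, vE_of_le _ _ le_rfl] at hNM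
        exact absurd hNM.symm (ne_of_gt hMa)
    have hMb : M < b := by
      rw [← hNM]
      exact hinner _ ((isInner_iff p _).mpr ⟨N, by omega, hNlt, rfl⟩)
    have hu : IsRMD (splitE N p).2.2 := by
      refine ⟨?_, ?_, ?_⟩
      · rw [length_splitE_snd N p hNle]; omega
      · show (splitE N p).1 < b
        exact lt_of_le_of_lt (le_of_eq hNM) hMb
      · intro k hk
        obtain ⟨m, hm0, hml, rfl⟩ := (isInner_iff _ k).mp hk
        rw [length_splitE_snd N p hNle] at hml
        rw [vE_snd N m p hml.le]
        exact le_trans (hle m hm0 (by omega)) (le_of_eq hNM.symm)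
    have hv : IsRMDComp (splitE N p).2.1 := by
      refine ih (p.length - N) (by omega) _ (length_splitE_fst N p) ?_ ?_ ?_
      · rw [length_splitE_fst N p]; omega
      · exact lt_of_lt_of_le hMa (le_of_eq hNM.symm)
      · intro k hk
        obtain ⟨m, hm0, hml, rfl⟩ := (isInner_iff _ k).mp hk
        rw [length_splitE_fst N p] at hml
        rw [vE_fst N m p]
        show vE p (m + N) < vE p N
        rw [hNM]
        refine lt_of_le_of_ne (hle (m + N) (by omega) (by omega)) (fun hEq => ?_)
        have := hmax (m + N) (by omega) (by omega) hEq
        omega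
    have := IsRMDComp.comp _ _ hv hu
    rwa [comp_splitE] at this

/-- A nontrivial path `p` can be written as a composition of finitely many right-minimal
directed paths if and only if `s(p) < t(p)` and every inner vertex `k` of `p`
satisfies `k < t(p)`. -/
theorem stmt_1 {V : Type*} [Quiver V] [LinearOrder V] {a b : V}
    (p : Path a b) (hp : p.length ≠ 0) :
    IsRMDComp p ↔ (a < b ∧ ∀ k : V, IsInnerVertex p k → k < b) := by
  refine ⟨isRMDComp_forward, fun ⟨hab, hinn⟩ => isRMDComp_reverse p.length p rfl hp hab hinn⟩
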